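/- Let (H, prec), (H', prec') be as in the gadget construction replacing each parallel edge by the 6-cycle gadget with two hanging edges. If x is a point of FSM(H, prec), then the extension x' defined by x'(u u_0) = x'(v v_0) = x(e), x'(u_0 u_1) = x'(v_0 v_2) = 1 - x(e) - x(phi_u(e)), x'(u_0 u_2) = x'(v_0 v_1) = x(phi_u(e)), x'(u_1 v_2) = x(e) + x(phi_u(e)), x'(u_2 v_1) = 1 - x(phi_u(e)) for each gadget (where phi_u(e) is the set of edges dominating e at u), and x'(f) = x(f) for edges without parallels, lies in FSM(H', prec'). -/

import Mathlib

attribute [local instance] Classical.propDecidable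

/-- Edge `e` is incident to vertex `v` (multigraph given by endpoint maps `fst`, `snd`). -/
def Incid {V E : Type} (fst snd : E → V) (e : E) (v : V) : Prop :=
  fst e = v ∨ snd e = v

/-- Edge `e` joins the vertices `u` and `w`. -/
def Joins {V E : Type} (fst snd : E → V) (e : E) (u w : V) : Prop :=
  (fst e = u ∧ snd e = w) ∨ (fst e = w ∧ snd e = u)

/-- In the preference system `(G, prec)`, edge `f` dominates edge `e`:
they share an endpoint `v` and `v` prefers `f` to `e`. -/
def Dominates {V E : Type} (fst snd : E → V) (prec : V → E → E → Prop) (f e : E) : Prop :=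
  ∃ v, Incid fst snd e v ∧ Incid fst snd f v ∧ prec v f e

/-- `prec` is a preference system: for each vertex `v`, `prec v` is a strict linear order
on the set of edges incident to `v`. -/
def IsPrefOrder {V E : Type} (fst snd : E → V) (prec : V → E → E → Prop) : Prop :=
  (∀ v e, ¬ prec v e e) ∧
  (∀ v e f g, prec v e f → prec v f g → prec v e g) ∧
  (∀ v e f, Incid fst snd e v → Incid fst snd f v → e ≠ f → prec v e f ∨ prec v f e)

/-- The graph `(V, E)` is simple: no loops and no parallel edges. -/
def SimpleG {V E : Type} (fst snd : E → V) : Prop :=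
  (∀ e, fst e ≠ snd e) ∧
  (∀ e f, e ≠ f → ¬ ((fst e = fst f ∧ snd e = snd f) ∨ (fst e = snd f ∧ snd e = fst f)))

/-- The fractional stable matching polytope `FSM(G, prec)`:
`x ≥ 0`, `x(δ(v)) ≤ 1` for every vertex `v`, and `x(φ(e)) ≥ 1` for every edge `e`,
where `φ(e)` consists of `e` together with all edges dominating `e`. -/
def FSMset {V E : Type} [Fintype V] [Fintype E] (fst snd : E → V)
    (prec : V → E → E → Prop) : Set (E → ℝ) :=
  {x | (∀ e, 0 ≤ x e) ∧
       (∀ v, ∑ e ∈ Finset.univ.filter (fun e => Incid fst snd e v), x e ≤ 1) ∧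
       (∀ e, x e + ∑ f ∈ Finset.univ.filter
          (fun f => f ≠ e ∧ Dominates fst snd prec f e), x f ≥ 1)}

/-- `M` is a stable matching of the preference system: a matching such that every edge is
in `M` or dominated by an edge of `M`. -/
def IsStableMatching {V E : Type} (fst snd : E → V) (prec : V → E → E → Prop)
    (M : Finset E) : Prop :=
  (∀ e ∈ M, ∀ f ∈ M, e ≠ f → ∀ v, ¬ (Incid fst snd e v ∧ Incid fst snd f v)) ∧
  (∀ e, e ∈ M ∨ ∃ f ∈ M, Dominates fst snd prec f e)

/-- The set of characteristic vectors of stable matchings. -/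
def SMvecs {V E : Type} (fst snd : E → V) (prec : V → E → E → Prop) : Set (E → ℝ) :=
  {x | ∃ M : Finset E, IsStableMatching fst snd prec M ∧
        x = fun e => if e ∈ M then (1 : ℝ) else 0}

/-- The preference system admits no odd cycle with cyclic preferences. -/
def NoOddCyclicCycle {V E : Type} (fst snd : E → V) (prec : V → E → E → Prop) : Prop :=
  ∀ n : ℕ, Odd n → ∀ (c : ZMod n → V) (g : ZMod n → E),
    Function.Injective c →
    (∀ i, Joins fst snd (g i) (c i) (c (i + 1))) →
    ¬ ((∀ i, prec (c (i + 1)) (g i) (g (i + 1))) ∨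
       (∀ i, prec (c (i + 1)) (g (i + 1)) (g i)))

/-- `e` is a parallel edge of the multigraph: it is not a loop and some other edge has the
same pair of endpoints. -/
def Par {V E : Type} (fst snd : E → V) (e : E) : Prop :=
  fst e ≠ snd e ∧ ∃ f, f ≠ e ∧
    ((fst f = fst e ∧ snd f = snd e) ∨ (fst f = snd e ∧ snd f = fst e))

/-- Vertices of the graph `H'` obtained from `H` by the Cechlárová–Fleiner gadget: the
old vertices, together with six new vertices `u₀,u₁,u₂,v₀,v₁,v₂` (coded `0,…,5`) for each
parallel edge. -/
abbrev GV {V E : Type} (fst snd : E → V) : Type :=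
  V ⊕ ({e : E // Par fst snd e} × Fin 6)

/-- Edges of `H'`: the non-parallel old edges, together with eight gadget edges
`uu₀, u₀u₁, u₀u₂, vv₀, v₀v₁, v₀v₂, u₁v₂, u₂v₁` (coded `0,…,7`) for each parallel edge. -/
abbrev GE {V E : Type} (fst snd : E → V) : Type :=
  {e : E // ¬ Par fst snd e} ⊕ ({e : E // Par fst snd e} × Fin 8)

/-- First endpoint of an edge of `H'` (with `u = fst e`, `v = snd e`). -/
def gfst {V E : Type} (fst snd : E → V) : GE fst snd → GV fst snd
  | Sum.inl e => Sum.inl (fst e.1)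
  | Sum.inr (e, k) =>
      ![Sum.inl (fst e.1), Sum.inr (e, 0), Sum.inr (e, 0), Sum.inl (snd e.1),
        Sum.inr (e, 3), Sum.inr (e, 3), Sum.inr (e, 1), Sum.inr (e, 2)] k

/-- Second endpoint of an edge of `H'`. -/
def gsnd {V E : Type} (fst snd : E → V) : GE fst snd → GV fst snd
  | Sum.inl e => Sum.inl (snd e.1)
  | Sum.inr (e, k) =>
      ![Sum.inr (e, 0), Sum.inr (e, 1), Sum.inr (e, 2), Sum.inr (e, 3),
        Sum.inr (e, 4), Sum.inr (e, 5), Sum.inr (e, 5), Sum.inr (e, 4)] k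

/-- The old edge of `H` underlying an edge of `H'` (hanging edges of a gadget correspond
to the replaced parallel edge). -/
def gproj {V E : Type} {fst snd : E → V} : GE fst snd → E
  | Sum.inl e => e.1
  | Sum.inr (e, _) => e.1

/-- Preference ranks inside the gadget: `grank i j` is the rank (smaller = more
preferred) of gadget edge `j` at gadget vertex `i`; `9` marks non-incident pairs.
The gadget preferences are: at `u₀`: `u₀u₁ ≺ uu₀ ≺ u₀u₂`; at `u₁`: `u₁v₂ ≺ u₀u₁`;
at `u₂`: `u₀u₂ ≺ u₂v₁`; at `v₀` : `v₀v₁ ≺ vv₀ ≺ v₀v₂`; at `v₁`: `u₂v₁ ≺ v₀v₁`;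
at `v₂`: `v₀v₂ ≺ u₁v₂`. -/
def grank : Fin 6 → Fin 8 → ℕ :=
  ![![1, 0, 2, 9, 9, 9, 9, 9],
    ![9, 1, 9, 9, 9, 9, 0, 9],
    ![9, 9, 0, 9, 9, 9, 9, 1],
    ![9, 9, 9, 1, 0, 2, 9, 9],
    ![9, 9, 9, 9, 1, 9, 9, 0],
    ![9, 9, 9, 9, 9, 0, 1, 9]]

/-- The preference system of `H'`: at an old vertex the preferences are inherited from
`H` (hanging edges `u u₀`, `v v₀` occupying the position of the replaced parallel edge),
at the gadget vertices they are given by `grank`. -/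
def gprec {V E : Type} (fst snd : E → V) (prec : V → E → E → Prop) :
    GV fst snd → GE fst snd → GE fst snd → Prop
  | Sum.inl u, a, b => prec u (gproj a) (gproj b)
  | Sum.inr (e, i), Sum.inr (e₁, j₁), Sum.inr (e₂, j₂) =>
      e₁ = e ∧ e₂ = e ∧ grank i j₁ < grank i j₂
  | _, _, _ => False

/-- The projection `ℝ^{E'} → ℝ^E`: a non-parallel edge keeps its coordinate, a parallel
edge `e` receives the coordinate of the hanging edge `u u₀` of its gadget. -/
noncomputable def projMap {V E : Type} (fst snd : E → V) (x' : GE fst snd → ℝ) : E → ℝ :=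
  fun e =>
    if h : Par fst snd e then x' (Sum.inr (⟨e, h⟩, 0)) else x' (Sum.inl ⟨e, h⟩)

/-- `x(φ_u(e))`: the total `x`-value of the edges dominating `e` at its endpoint
`u = fst e`. -/
noncomputable def phiU {V E : Type} [Fintype V] [Fintype E] (fst snd : E → V)
    (prec : V → E → E → Prop) (x : E → ℝ) (e : E) : ℝ :=
  ∑ f ∈ Finset.univ.filter (fun f => Incid fst snd f (fst e) ∧ prec (fst e) f e), x f

/-- The extension of `x : ℝ^E` to `ℝ^{E'}`: with `a = x(e)` and `s = x(φ_u(e))`, the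
gadget of a parallel edge `e` receives the values `uu₀ = vv₀ = a`,
`u₀u₁ = v₀v₂ = 1 - a - s`, `u₀u₂ = v₀v₁ = s`, `u₁v₂ = a + s`, `u₂v₁ = 1 - s`. -/
noncomputable def mkExt {V E : Type} [Fintype V] [Fintype E] (fst snd : E → V)
    (prec : V → E → E → Prop) (x : E → ℝ) : GE fst snd → ℝ
  | Sum.inl e => x e.1
  | Sum.inr (e, k) =>
      ![x e.1,
        1 - x e.1 - phiU fst snd prec x e.1,
        phiU fst snd prec x e.1,
        x e.1,
        phiU fst snd prec x e.1,
        1 - x e.1 - phiU fst snd prec x e.1,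
        x e.1 + phiU fst snd prec x e.1,
        1 - phiU fst snd prec x e.1] k


/-! ### Auxiliary machinery for the proof of statement 13 -/

section Aux

variable {V E : Type} (fst snd : E → V) (prec : V → E → E → Prop)

@[simp] lemma gfst_inl (f : {e : E // ¬ Par fst snd e}) :
    gfst fst snd (Sum.inl f) = Sum.inl (fst f.1) := rfl
@[simp] lemma gsnd_inl (f : {e : E // ¬ Par fst snd e}) :
    gsnd fst snd (Sum.inl f) = Sum.inl (snd f.1) := rfl
@[simp] lemma gfst_0 (f : {e : E // Par fst snd e}) :
    gfst fst snd (Sum.inr (f, (0 : Fin 8))) = Sum.inl (fst f.1) := rfl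
@[simp] lemma gsnd_0 (f : {e : E // Par fst snd e}) :
    gsnd fst snd (Sum.inr (f, (0 : Fin 8))) = Sum.inr (f, 0) := rfl
@[simp] lemma gfst_1 (f : {e : E // Par fst snd e}) :
    gfst fst snd (Sum.inr (f, (1 : Fin 8))) = Sum.inr (f, 0) := rfl
@[simp] lemma gsnd_1 (f : {e : E // Par fst snd e}) :
    gsnd fst snd (Sum.inr (f, (1 : Fin 8))) = Sum.inr (f, 1) := rfl
@[simp] lemma gfst_2 (f : {e : E // Par fst snd e}) :
    gfst fst snd (Sum.inr (f, (2 : Fin 8))) = Sum.inr (f, 0) := rfl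
@[simp] lemma gsnd_2 (f : {e : E // Par fst snd e}) :
    gsnd fst snd (Sum.inr (f, (2 : Fin 8))) = Sum.inr (f, 2) := rfl
@[simp] lemma gfst_3 (f : {e : E // Par fst snd e}) :
    gfst fst snd (Sum.inr (f, (3 : Fin 8))) = Sum.inl (snd f.1) := rfl
@[simp] lemma gsnd_3 (f : {e : E // Par fst snd e}) :
    gsnd fst snd (Sum.inr (f, (3 : Fin 8))) = Sum.inr (f, 3) := rfl
@[simp] lemma gfst_4 (f : {e : E // Par fst snd e}) :
    gfst fst snd (Sum.inr (f, (4 : Fin 8))) = Sum.inr (f, 3) := rfl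
@[simp] lemma gsnd_4 (f : {e : E // Par fst snd e}) :
    gsnd fst snd (Sum.inr (f, (4 : Fin 8))) = Sum.inr (f, 4) := rfl
@[simp] lemma gfst_5 (f : {e : E // Par fst snd e}) :
    gfst fst snd (Sum.inr (f, (5 : Fin 8))) = Sum.inr (f, 3) := rfl
@[simp] lemma gsnd_5 (f : {e : E // Par fst snd e}) :
    gsnd fst snd (Sum.inr (f, (5 : Fin 8))) = Sum.inr (f, 5) := rfl
@[simp] lemma gfst_6 (f : {e : E // Par fst snd e}) :
    gfst fst snd (Sum.inr (f, (6 : Fin 8))) = Sum.inr (f, 1) := rfl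
@[simp] lemma gsnd_6 (f : {e : E // Par fst snd e}) :
    gsnd fst snd (Sum.inr (f, (6 : Fin 8))) = Sum.inr (f, 5) := rfl
@[simp] lemma gfst_7 (f : {e : E // Par fst snd e}) :
    gfst fst snd (Sum.inr (f, (7 : Fin 8))) = Sum.inr (f, 2) := rfl
@[simp] lemma gsnd_7 (f : {e : E // Par fst snd e}) :
    gsnd fst snd (Sum.inr (f, (7 : Fin 8))) = Sum.inr (f, 4) := rfl

/-- Canonical lift of an `H`-edge incident to `w` to an `H'`-edge incident to `Sum.inl w`. -/
noncomputable def iAt (w : V) (g : E) : GE fst snd :=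
  if h : Par fst snd g then
    (if fst g = w then Sum.inr (⟨g, h⟩, 0) else Sum.inr (⟨g, h⟩, 3))
  else Sum.inl ⟨g, h⟩

/-- Canonical lift of a dominator `g` of a non-parallel edge `f`. -/
noncomputable def iD (f g : E) : GE fst snd :=
  if h : Par fst snd g then
    (if Incid fst snd f (fst g) ∧ prec (fst g) g f then Sum.inr (⟨g, h⟩, 0)
     else Sum.inr (⟨g, h⟩, 3))
  else Sum.inl ⟨g, h⟩

lemma gproj_iAt (w : V) (g : E) : gproj (iAt fst snd w g) = g := by
  unfold iAt; split_ifs <;> rfl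

lemma gproj_iD (f g : E) : gproj (iD fst snd prec f g) = g := by
  unfold iD; split_ifs <;> rfl

lemma incid_inl_inl (f : {e : E // ¬ Par fst snd e}) (w : V) :
    Incid (gfst fst snd) (gsnd fst snd) (Sum.inl f) (Sum.inl w) ↔ Incid fst snd f.1 w := by
  simp [Incid]

lemma incid_inr_inl (f : {e : E // Par fst snd e}) (k : Fin 8) (w : V) :
    Incid (gfst fst snd) (gsnd fst snd) (Sum.inr (f, k)) (Sum.inl w) ↔
      (k = 0 ∧ fst f.1 = w) ∨ (k = 3 ∧ snd f.1 = w) := by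
  fin_cases k <;> simp [Incid]

lemma incid_iAt (w : V) (g : E) (hg : Incid fst snd g w) :
    Incid (gfst fst snd) (gsnd fst snd) (iAt fst snd w g) (Sum.inl w) := by
  unfold iAt
  split_ifs with h h1
  · exact Or.inl (by show Sum.inl (fst g) = _; rw [h1])
  · have h2 : snd g = w := hg.resolve_left h1
    exact Or.inl (by show Sum.inl (snd g) = _; rw [h2])
  · rcases hg with h1 | h2
    · exact Or.inl (by show Sum.inl (fst g) = _; rw [h1])
    · exact Or.inr (by show Sum.inl (snd g) = _; rw [h2])

variable [Fintype V] [Fintype E]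

attribute [local instance] Classical.propDecidable

lemma mkExt_iAt (x : E → ℝ) (w : V) (g : E) :
    mkExt fst snd prec x (iAt fst snd w g) = x g := by
  unfold iAt; split_ifs <;> rfl

lemma mkExt_iD (x : E → ℝ) (f g : E) :
    mkExt fst snd prec x (iD fst snd prec f g) = x g := by
  unfold iD; split_ifs <;> rfl

lemma mkExt_0 (x : E → ℝ) (f : {e : E // Par fst snd e}) :
    mkExt fst snd prec x (Sum.inr (f, (0 : Fin 8))) = x f.1 := rfl
lemma mkExt_1 (x : E → ℝ) (f : {e : E // Par fst snd e}) :
    mkExt fst snd prec x (Sum.inr (f, (1 : Fin 8))) = 1 - x f.1 - phiU fst snd prec x f.1 := rfl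
lemma mkExt_2 (x : E → ℝ) (f : {e : E // Par fst snd e}) :
    mkExt fst snd prec x (Sum.inr (f, (2 : Fin 8))) = phiU fst snd prec x f.1 := rfl
lemma mkExt_3 (x : E → ℝ) (f : {e : E // Par fst snd e}) :
    mkExt fst snd prec x (Sum.inr (f, (3 : Fin 8))) = x f.1 := rfl
lemma mkExt_4 (x : E → ℝ) (f : {e : E // Par fst snd e}) :
    mkExt fst snd prec x (Sum.inr (f, (4 : Fin 8))) = phiU fst snd prec x f.1 := rfl
lemma mkExt_5 (x : E → ℝ) (f : {e : E // Par fst snd e}) :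
    mkExt fst snd prec x (Sum.inr (f, (5 : Fin 8))) = 1 - x f.1 - phiU fst snd prec x f.1 := rfl
lemma mkExt_6 (x : E → ℝ) (f : {e : E // Par fst snd e}) :
    mkExt fst snd prec x (Sum.inr (f, (6 : Fin 8))) = x f.1 + phiU fst snd prec x f.1 := rfl
lemma mkExt_7 (x : E → ℝ) (f : {e : E // Par fst snd e}) :
    mkExt fst snd prec x (Sum.inr (f, (7 : Fin 8))) = 1 - phiU fst snd prec x f.1 := rfl

/-- Summing over an injectively embedded set. -/
lemma sum_image_proj (S : Finset E) (x : E → ℝ) (x' : GE fst snd → ℝ) (i : E → GE fst snd)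
    (hinj : ∀ g, gproj (i g) = g) (hval : ∀ g ∈ S, x' (i g) = x g) :
    ∑ t ∈ S.image i, x' t = ∑ g ∈ S, x g := by
  rw [Finset.sum_image (fun a _ b _ h => by rw [← hinj a, h, hinj])]
  exact Finset.sum_congr rfl hval

lemma phiU_nonneg (x : E → ℝ) (hx0 : ∀ e, 0 ≤ x e) (e : E) :
    0 ≤ phiU fst snd prec x e :=
  Finset.sum_nonneg fun f _ => hx0 f

lemma add_phiU_le_one (x : E → ℝ) (hx : x ∈ FSMset fst snd prec)
    (hirr : ∀ v e, ¬ prec v e e) (e : E) :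
    x e + phiU fst snd prec x e ≤ 1 := by
  have hnm : e ∉ Finset.univ.filter (fun f => Incid fst snd f (fst e) ∧ prec (fst e) f e) := by
    simp only [Finset.mem_filter]
    rintro ⟨-, -, hp⟩
    exact hirr (fst e) e hp
  have h1 : x e + phiU fst snd prec x e =
      ∑ f ∈ insert e (Finset.univ.filter (fun f => Incid fst snd f (fst e) ∧ prec (fst e) f e)),
        x f := (Finset.sum_insert hnm).symm
  rw [h1]
  refine le_trans (Finset.sum_le_sum_of_subset_of_nonneg ?_ (fun f _ _ => hx.1 f))
    (hx.2.1 (fst e))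
  intro f hf
  rcases Finset.mem_insert.1 hf with rfl | hf
  · exact Finset.mem_filter.2 ⟨Finset.mem_univ _, Or.inl rfl⟩
  · exact Finset.mem_filter.2 ⟨Finset.mem_univ _, (Finset.mem_filter.1 hf).2.1⟩

lemma mkExt_nonneg (x : E → ℝ) (hx : x ∈ FSMset fst snd prec)
    (hirr : ∀ v e, ¬ prec v e e) :
    ∀ e', 0 ≤ mkExt fst snd prec x e' := by
  intro e'
  cases e' with
  | inl f => exact hx.1 f.1
  | inr p =>
    obtain ⟨f, k⟩ := p
    have ha := hx.1 f.1
    have hs := phiU_nonneg fst snd prec x hx.1 f.1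
    have has := add_phiU_le_one fst snd prec x hx hirr f.1
    fin_cases k
    · exact ha
    · show (0:ℝ) ≤ 1 - x f.1 - phiU fst snd prec x f.1; linarith
    · exact hs
    · exact ha
    · exact hs
    · show (0:ℝ) ≤ 1 - x f.1 - phiU fst snd prec x f.1; linarith
    · show (0:ℝ) ≤ x f.1 + phiU fst snd prec x f.1; linarith
    · show (0:ℝ) ≤ 1 - phiU fst snd prec x f.1; linarith

/-- Membership of a gadget dominator in the domination filter set. -/
lemma dom_mem (x : E → ℝ) (f : {e : E // Par fst snd e}) (i6 : Fin 6) (j k : Fin 8)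
    (h1 : Incid (gfst fst snd) (gsnd fst snd) (Sum.inr (f, k)) (Sum.inr (f, i6)))
    (h2 : Incid (gfst fst snd) (gsnd fst snd) (Sum.inr (f, j)) (Sum.inr (f, i6)))
    (h3 : grank i6 j < grank i6 k) (hjk : j ≠ k) :
    Sum.inr (f, j) ∈ Finset.univ.filter (fun f' => f' ≠ Sum.inr (f, k) ∧
      Dominates (gfst fst snd) (gsnd fst snd) (gprec fst snd prec) f' (Sum.inr (f, k))) :=
  Finset.mem_filter.2 ⟨Finset.mem_univ _,
    fun h => hjk (congrArg Prod.snd (Sum.inr.inj h)),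
    Sum.inr (f, i6), h1, h2, rfl, rfl, h3⟩

/-- Lifting a dominator of a non-parallel edge. -/
lemma iD_spec (f : {e : E // ¬ Par fst snd e}) (g : E) (hne : g ≠ f.1)
    (hdom : Dominates fst snd prec g f.1) :
    iD fst snd prec f.1 g ≠ Sum.inl f ∧
      Dominates (gfst fst snd) (gsnd fst snd) (gprec fst snd prec)
        (iD fst snd prec f.1 g) (Sum.inl f) := by
  obtain ⟨w, hfw, hgw, hp⟩ := hdom
  unfold iD
  split_ifs with h hc
  · refine ⟨Sum.inr_ne_inl, ?_⟩
    exact ⟨Sum.inl (fst g), (incid_inl_inl fst snd f (fst g)).2 hc.1, Or.inl rfl, hc.2⟩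
  · have hw : snd g = w := by
      rcases hgw with h1 | h1
      · exact absurd ⟨by rw [h1]; exact hfw, by rw [h1]; exact hp⟩ hc
      · exact h1
    refine ⟨Sum.inr_ne_inl, ?_⟩
    exact ⟨Sum.inl w, (incid_inl_inl fst snd f w).2 hfw,
      (incid_inr_inl fst snd ⟨g, h⟩ 3 w).2 (Or.inr ⟨rfl, hw⟩), hp⟩
  · exact ⟨fun h' => hne (congrArg Subtype.val (Sum.inl.inj h')),
      Sum.inl w, (incid_inl_inl fst snd f w).2 hfw,
      (incid_inl_inl fst snd ⟨g, h⟩ w).2 hgw, hp⟩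

end Aux

/-- if `x ∈ FSM(H, prec)`, then its extension `mkExt` lies in
`FSM(H', prec')` of the gadget construction. -/
theorem stmt_13 {V E : Type} [Fintype V] [Fintype E] (fst snd : E → V)
    (prec : V → E → E → Prop) (hord : IsPrefOrder fst snd prec)
    (x : E → ℝ) (hx : x ∈ FSMset fst snd prec) :
    mkExt fst snd prec x ∈
      FSMset (gfst fst snd) (gsnd fst snd) (gprec fst snd prec) := by
  obtain ⟨hx0, hdeg, hstab⟩ := hx
  have hxmem : x ∈ FSMset fst snd prec := ⟨hx0, hdeg, hstab⟩
  have hirr : ∀ v e, ¬ prec v e e := hord.1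
  have hnn : ∀ e', 0 ≤ mkExt fst snd prec x e' := mkExt_nonneg fst snd prec x hxmem hirr
  refine ⟨hnn, ?_, ?_⟩
  · -- degree constraints
    intro v
    cases v with
    | inl w =>
      have heq : ∑ e' ∈ Finset.univ.filter
            (fun e' => Incid (gfst fst snd) (gsnd fst snd) e' (Sum.inl w)),
            mkExt fst snd prec x e'
          = ∑ g ∈ Finset.univ.filter (fun g => Incid fst snd g w), x g := by
        refine Finset.sum_nbij' gproj (iAt fst snd w) ?_ ?_ ?_ ?_ ?_
        · intro e' he'
          refine Finset.mem_filter.2 ⟨Finset.mem_univ _, ?_⟩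
          have hi := (Finset.mem_filter.1 he').2
          cases e' with
          | inl g => exact (incid_inl_inl fst snd g w).1 hi
          | inr p =>
            obtain ⟨g, k⟩ := p
            rcases (incid_inr_inl fst snd g k w).1 hi with ⟨hk, h0⟩ | ⟨hk, h3⟩
            · exact Or.inl h0
            · exact Or.inr h3
        · intro g hg
          exact Finset.mem_filter.2 ⟨Finset.mem_univ _,
            incid_iAt fst snd w g (Finset.mem_filter.1 hg).2⟩
        · intro e' he'
          have hi := (Finset.mem_filter.1 he').2
          cases e' with
          | inl g =>
            show iAt fst snd w g.1 = Sum.inl g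
            unfold iAt
            rw [dif_neg g.2]
          | inr p =>
            obtain ⟨g, k⟩ := p
            rcases (incid_inr_inl fst snd g k w).1 hi with ⟨hk, h0⟩ | ⟨hk, h3⟩
            · subst hk
              show iAt fst snd w g.1 = Sum.inr (g, 0)
              unfold iAt
              rw [dif_pos g.2, if_pos h0]
            · subst hk
              have hne : fst g.1 ≠ w := fun hh => g.2.1 (hh.trans h3.symm)
              show iAt fst snd w g.1 = Sum.inr (g, 3)
              unfold iAt
              rw [dif_pos g.2, if_neg hne]
        · intro g _
          exact gproj_iAt fst snd w g
        · intro e' he'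
          have hi := (Finset.mem_filter.1 he').2
          cases e' with
          | inl g => rfl
          | inr p =>
            obtain ⟨g, k⟩ := p
            rcases (incid_inr_inl fst snd g k w).1 hi with ⟨hk, h0⟩ | ⟨hk, h3⟩ <;> subst hk <;> rfl
      rw [heq]
      exact hdeg w
    | inr p =>
      obtain ⟨f, i⟩ := p
      have key : ∑ e' ∈ Finset.univ.filter
            (fun e' => Incid (gfst fst snd) (gsnd fst snd) e' (Sum.inr (f, i))),
            mkExt fst snd prec x e'
          = ∑ k : Fin 8,
            (if Incid (gfst fst snd) (gsnd fst snd) (Sum.inr (f, k)) (Sum.inr (f, i)) then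
              mkExt fst snd prec x (Sum.inr (f, k)) else 0) := by
        rw [Finset.sum_filter, Fintype.sum_sum_type, Fintype.sum_prod_type]
        have h1 : ∑ g : {e : E // ¬ Par fst snd e},
            (if Incid (gfst fst snd) (gsnd fst snd) (Sum.inl g) (Sum.inr (f, i)) then
              mkExt fst snd prec x (Sum.inl g) else 0) = 0 :=
          Finset.sum_eq_zero fun g _ => if_neg (by simp [Incid])
        rw [h1, zero_add]
        refine Finset.sum_eq_single_of_mem f (Finset.mem_univ _) ?_
        intro b _ hb
        refine Finset.sum_eq_zero fun k _ => if_neg ?_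
        fin_cases k <;> simp [Incid, hb]
      rw [key, Fin.sum_univ_eight]
      fin_cases i <;>
        simp only [Incid, gfst_0, gfst_1, gfst_2, gfst_3, gfst_4, gfst_5, gfst_6, gfst_7,
          gsnd_0, gsnd_1, gsnd_2, gsnd_3, gsnd_4, gsnd_5, gsnd_6, gsnd_7,
          mkExt_0, mkExt_1, mkExt_2, mkExt_3, mkExt_4, mkExt_5, mkExt_6, mkExt_7,
          Sum.inr.injEq, Sum.inl.injEq, Prod.mk.injEq, reduceCtorEq] <;>
        simp <;> linarith [hx0 f.1, phiU_nonneg fst snd prec x hx0 f.1]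
  · -- stability constraints
    intro e'
    cases e' with
    | inl f =>
      have hD : ∑ g ∈ Finset.univ.filter
            (fun g => g ≠ f.1 ∧ Dominates fst snd prec g f.1), x g
          ≤ ∑ f' ∈ Finset.univ.filter (fun f' => f' ≠ Sum.inl f ∧
              Dominates (gfst fst snd) (gsnd fst snd) (gprec fst snd prec) f' (Sum.inl f)),
            mkExt fst snd prec x f' := by
        rw [← sum_image_proj fst snd
            (Finset.univ.filter (fun g => g ≠ f.1 ∧ Dominates fst snd prec g f.1)) x
            (mkExt fst snd prec x) (iD fst snd prec f.1)
            (gproj_iD fst snd prec f.1) (fun g _ => mkExt_iD fst snd prec x f.1 g)]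
        refine Finset.sum_le_sum_of_subset_of_nonneg ?_ (fun t _ _ => hnn t)
        intro t ht
        obtain ⟨g, hg, rfl⟩ := Finset.mem_image.1 ht
        have hg' := (Finset.mem_filter.1 hg).2
        exact Finset.mem_filter.2 ⟨Finset.mem_univ _, iD_spec fst snd prec f g hg'.1 hg'.2⟩
      have h2 := hstab f.1
      have hfinal : (1:ℝ) ≤ mkExt fst snd prec x (Sum.inl f) +
          ∑ f' ∈ Finset.univ.filter (fun f' => f' ≠ Sum.inl f ∧
              Dominates (gfst fst snd) (gsnd fst snd) (gprec fst snd prec) f' (Sum.inl f)),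
            mkExt fst snd prec x f' := by
        have e1 : mkExt fst snd prec x (Sum.inl f) = x f.1 := rfl
        rw [e1]
        exact le_trans h2 ((add_le_add_iff_left _).2 hD)
      show (1:ℝ) ≤ _
      convert hfinal using 4
    | inr p =>
      obtain ⟨f, k⟩ := p
      fin_cases k
      · have hnotin : Sum.inr (f, (1 : Fin 8)) ∉
            (Finset.univ.filter (fun g => Incid fst snd g (fst f.1) ∧ prec (fst f.1) g f.1)).image (iAt fst snd (fst f.1)) := by
          intro h
          obtain ⟨g, hg, hgeq⟩ := Finset.mem_image.1 h
          have hgf : g = f.1 := by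
            have h2 := gproj_iAt fst snd (fst f.1) g
            rw [hgeq] at h2
            exact h2.symm
          rw [hgf] at hg
          exact hirr _ _ (Finset.mem_filter.1 hg).2.2
        have hsub : insert (Sum.inr (f, (1 : Fin 8)))
            ((Finset.univ.filter (fun g => Incid fst snd g (fst f.1) ∧ prec (fst f.1) g f.1)).image (iAt fst snd (fst f.1)))
            ⊆ Finset.univ.filter (fun f' => f' ≠ Sum.inr (f, (0:Fin 8)) ∧
              Dominates (gfst fst snd) (gsnd fst snd) (gprec fst snd prec) f' (Sum.inr (f, (0:Fin 8)))) := by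
          intro t ht
          rcases Finset.mem_insert.1 ht with rfl | ht
          · exact dom_mem fst snd prec x f 0 1 0 (Or.inr rfl) (Or.inl rfl)
              (by decide) (by decide)
          · obtain ⟨g, hg, rfl⟩ := Finset.mem_image.1 ht
            obtain ⟨hgi, hgp⟩ := (Finset.mem_filter.1 hg).2
            have hgf : g ≠ f.1 := fun hh => hirr _ _ (hh ▸ hgp)
            refine Finset.mem_filter.2 ⟨Finset.mem_univ _, ?_, ?_⟩
            · intro hh
              apply hgf
              have h2 := gproj_iAt fst snd (fst f.1) g
              rw [hh] at h2
              exact h2.symm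
            · refine ⟨Sum.inl (fst f.1), Or.inl rfl,
                incid_iAt fst snd (fst f.1) g hgi, ?_⟩
              show prec (fst f.1) (gproj (iAt fst snd (fst f.1) g))
                (gproj (Sum.inr (f, (0:Fin 8))))
              rw [gproj_iAt]
              exact hgp
        have h1 := Finset.sum_le_sum_of_subset_of_nonneg hsub (fun t _ _ => hnn t)
        rw [Finset.sum_insert hnotin, sum_image_proj fst snd _ x (mkExt fst snd prec x)
          (iAt fst snd (fst f.1)) (gproj_iAt fst snd (fst f.1))
          (fun g _ => mkExt_iAt fst snd prec x (fst f.1) g), mkExt_1] at h1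
        have hphi : ∑ g ∈ Finset.univ.filter (fun g => Incid fst snd g (fst f.1) ∧ prec (fst f.1) g f.1), x g
            = phiU fst snd prec x f.1 := rfl
        rw [hphi] at h1
        have hfinal : (1:ℝ) ≤ mkExt fst snd prec x (Sum.inr (f, (0:Fin 8))) +
            ∑ f' ∈ Finset.univ.filter (fun f' => f' ≠ Sum.inr (f, (0:Fin 8)) ∧
              Dominates (gfst fst snd) (gsnd fst snd) (gprec fst snd prec) f' (Sum.inr (f, (0:Fin 8)))),
              mkExt fst snd prec x f' := by
          rw [mkExt_0]
          linarith
        show (1:ℝ) ≤ _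
        convert hfinal using 4
        all_goals rfl
      · have hm := dom_mem fst snd prec x f 1 6 1 (Or.inr rfl) (Or.inl rfl)
          (by decide) (by decide)
        have h1 := Finset.sum_le_sum_of_subset_of_nonneg
          (Finset.singleton_subset_iff.2 hm) (fun t _ _ => hnn t)
        rw [Finset.sum_singleton, mkExt_6] at h1
        have hfinal : (1:ℝ) ≤ mkExt fst snd prec x (Sum.inr (f, (1:Fin 8))) +
            ∑ f' ∈ Finset.univ.filter (fun f' => f' ≠ Sum.inr (f, (1:Fin 8)) ∧
              Dominates (gfst fst snd) (gsnd fst snd) (gprec fst snd prec) f' (Sum.inr (f, (1:Fin 8)))),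
              mkExt fst snd prec x f' := by
          rw [mkExt_1]
          linarith
        show (1:ℝ) ≤ _
        convert hfinal using 4
        all_goals rfl
      · have hm1 := dom_mem fst snd prec x f 0 0 2 (Or.inl rfl) (Or.inr rfl)
          (by decide) (by decide)
        have hm2 := dom_mem fst snd prec x f 0 1 2 (Or.inl rfl) (Or.inl rfl)
          (by decide) (by decide)
        have hne12 : (Sum.inr (f, (0:Fin 8)) : GE fst snd) ≠ Sum.inr (f, (1:Fin 8)) :=
          by
            intro h
            have h2 := congrArg Prod.snd (Sum.inr.inj h)
            simp at h2
        have h1 := Finset.sum_le_sum_of_subset_of_nonneg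
          (Finset.insert_subset_iff.2 ⟨hm1, Finset.singleton_subset_iff.2 hm2⟩)
          (fun t _ _ => hnn t)
        rw [Finset.sum_pair hne12, mkExt_0, mkExt_1] at h1
        have hfinal : (1:ℝ) ≤ mkExt fst snd prec x (Sum.inr (f, (2:Fin 8))) +
            ∑ f' ∈ Finset.univ.filter (fun f' => f' ≠ Sum.inr (f, (2:Fin 8)) ∧
              Dominates (gfst fst snd) (gsnd fst snd) (gprec fst snd prec) f' (Sum.inr (f, (2:Fin 8)))),
              mkExt fst snd prec x f' := by
          rw [mkExt_2]
          linarith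
        show (1:ℝ) ≤ _
        convert hfinal using 4
        all_goals rfl
      · have hnotin : Sum.inr (f, (4 : Fin 8)) ∉
            (Finset.univ.filter (fun g => Incid fst snd g (snd f.1) ∧ prec (snd f.1) g f.1)).image (iAt fst snd (snd f.1)) := by
          intro h
          obtain ⟨g, hg, hgeq⟩ := Finset.mem_image.1 h
          have hgf : g = f.1 := by
            have h2 := gproj_iAt fst snd (snd f.1) g
            rw [hgeq] at h2
            exact h2.symm
          rw [hgf] at hg
          exact hirr _ _ (Finset.mem_filter.1 hg).2.2
        have hsub : insert (Sum.inr (f, (4 : Fin 8)))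
            ((Finset.univ.filter (fun g => Incid fst snd g (snd f.1) ∧ prec (snd f.1) g f.1)).image (iAt fst snd (snd f.1)))
            ⊆ Finset.univ.filter (fun f' => f' ≠ Sum.inr (f, (3:Fin 8)) ∧
              Dominates (gfst fst snd) (gsnd fst snd) (gprec fst snd prec) f' (Sum.inr (f, (3:Fin 8)))) := by
          intro t ht
          rcases Finset.mem_insert.1 ht with rfl | ht
          · exact dom_mem fst snd prec x f 3 4 3 (Or.inr rfl) (Or.inl rfl)
              (by decide) (by decide)
          · obtain ⟨g, hg, rfl⟩ := Finset.mem_image.1 ht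
            obtain ⟨hgi, hgp⟩ := (Finset.mem_filter.1 hg).2
            have hgf : g ≠ f.1 := fun hh => hirr _ _ (hh ▸ hgp)
            refine Finset.mem_filter.2 ⟨Finset.mem_univ _, ?_, ?_⟩
            · intro hh
              apply hgf
              have h2 := gproj_iAt fst snd (snd f.1) g
              rw [hh] at h2
              exact h2.symm
            · refine ⟨Sum.inl (snd f.1), Or.inl rfl,
                incid_iAt fst snd (snd f.1) g hgi, ?_⟩
              show prec (snd f.1) (gproj (iAt fst snd (snd f.1) g))
                (gproj (Sum.inr (f, (3:Fin 8))))
              rw [gproj_iAt]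
              exact hgp
        have h1 := Finset.sum_le_sum_of_subset_of_nonneg hsub (fun t _ _ => hnn t)
        rw [Finset.sum_insert hnotin, sum_image_proj fst snd _ x (mkExt fst snd prec x)
          (iAt fst snd (snd f.1)) (gproj_iAt fst snd (snd f.1))
          (fun g _ => mkExt_iAt fst snd prec x (snd f.1) g), mkExt_4] at h1
        have hDsub : Finset.univ.filter (fun g => g ≠ f.1 ∧ Dominates fst snd prec g f.1) ⊆
            (Finset.univ.filter (fun g => Incid fst snd g (fst f.1) ∧ prec (fst f.1) g f.1)) ∪ (Finset.univ.filter (fun g => Incid fst snd g (snd f.1) ∧ prec (snd f.1) g f.1)) := by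
          intro g hg
          obtain ⟨-, hgne, w, hfw, hgw, hp⟩ := Finset.mem_filter.1 hg
          rcases hfw with hw | hw
          · exact Finset.mem_union_left _ (Finset.mem_filter.2 ⟨Finset.mem_univ _,
              by rw [hw]; exact hgw, by rw [hw]; exact hp⟩)
          · exact Finset.mem_union_right _ (Finset.mem_filter.2 ⟨Finset.mem_univ _,
              by rw [hw]; exact hgw, by rw [hw]; exact hp⟩)
        have hui : ∑ g ∈ (Finset.univ.filter (fun g => Incid fst snd g (fst f.1) ∧ prec (fst f.1) g f.1)) ∪ (Finset.univ.filter (fun g => Incid fst snd g (snd f.1) ∧ prec (snd f.1) g f.1)), x g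
              + ∑ g ∈ (Finset.univ.filter (fun g => Incid fst snd g (fst f.1) ∧ prec (fst f.1) g f.1)) ∩ (Finset.univ.filter (fun g => Incid fst snd g (snd f.1) ∧ prec (snd f.1) g f.1)), x g
            = ∑ g ∈ (Finset.univ.filter (fun g => Incid fst snd g (fst f.1) ∧ prec (fst f.1) g f.1)), x g + ∑ g ∈ (Finset.univ.filter (fun g => Incid fst snd g (snd f.1) ∧ prec (snd f.1) g f.1)), x g :=
          Finset.sum_union_inter
        have hinn : 0 ≤ ∑ g ∈ (Finset.univ.filter (fun g => Incid fst snd g (fst f.1) ∧ prec (fst f.1) g f.1)) ∩ (Finset.univ.filter (fun g => Incid fst snd g (snd f.1) ∧ prec (snd f.1) g f.1)), x g :=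
          Finset.sum_nonneg fun g _ => hx0 g
        have hD := Finset.sum_le_sum_of_subset_of_nonneg hDsub (fun g _ _ => hx0 g)
        have hphi : ∑ g ∈ Finset.univ.filter (fun g => Incid fst snd g (fst f.1) ∧ prec (fst f.1) g f.1), x g
            = phiU fst snd prec x f.1 := rfl
        rw [hphi] at hui
        have hst := hstab f.1
        have hfinal : (1:ℝ) ≤ mkExt fst snd prec x (Sum.inr (f, (3:Fin 8))) +
            ∑ f' ∈ Finset.univ.filter (fun f' => f' ≠ Sum.inr (f, (3:Fin 8)) ∧
              Dominates (gfst fst snd) (gsnd fst snd) (gprec fst snd prec) f' (Sum.inr (f, (3:Fin 8)))),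
              mkExt fst snd prec x f' := by
          rw [mkExt_3]
          linarith
        show (1:ℝ) ≤ _
        convert hfinal using 4
        all_goals rfl
      · have hm := dom_mem fst snd prec x f 4 7 4 (Or.inr rfl) (Or.inr rfl)
          (by decide) (by decide)
        have h1 := Finset.sum_le_sum_of_subset_of_nonneg
          (Finset.singleton_subset_iff.2 hm) (fun t _ _ => hnn t)
        rw [Finset.sum_singleton, mkExt_7] at h1
        have hfinal : (1:ℝ) ≤ mkExt fst snd prec x (Sum.inr (f, (4:Fin 8))) +
            ∑ f' ∈ Finset.univ.filter (fun f' => f' ≠ Sum.inr (f, (4:Fin 8)) ∧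
              Dominates (gfst fst snd) (gsnd fst snd) (gprec fst snd prec) f' (Sum.inr (f, (4:Fin 8)))),
              mkExt fst snd prec x f' := by
          rw [mkExt_4]
          linarith
        show (1:ℝ) ≤ _
        convert hfinal using 4
        all_goals rfl
      · have hm1 := dom_mem fst snd prec x f 3 3 5 (Or.inl rfl) (Or.inr rfl)
          (by decide) (by decide)
        have hm2 := dom_mem fst snd prec x f 3 4 5 (Or.inl rfl) (Or.inl rfl)
          (by decide) (by decide)
        have hne12 : (Sum.inr (f, (3:Fin 8)) : GE fst snd) ≠ Sum.inr (f, (4:Fin 8)) :=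
          by
            intro h
            have h2 := congrArg Prod.snd (Sum.inr.inj h)
            simp at h2
        have h1 := Finset.sum_le_sum_of_subset_of_nonneg
          (Finset.insert_subset_iff.2 ⟨hm1, Finset.singleton_subset_iff.2 hm2⟩)
          (fun t _ _ => hnn t)
        rw [Finset.sum_pair hne12, mkExt_3, mkExt_4] at h1
        have hfinal : (1:ℝ) ≤ mkExt fst snd prec x (Sum.inr (f, (5:Fin 8))) +
            ∑ f' ∈ Finset.univ.filter (fun f' => f' ≠ Sum.inr (f, (5:Fin 8)) ∧
              Dominates (gfst fst snd) (gsnd fst snd) (gprec fst snd prec) f' (Sum.inr (f, (5:Fin 8)))),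
              mkExt fst snd prec x f' := by
          rw [mkExt_5]
          linarith
        show (1:ℝ) ≤ _
        convert hfinal using 4
        all_goals rfl
      · have hm := dom_mem fst snd prec x f 5 5 6 (Or.inr rfl) (Or.inr rfl)
          (by decide) (by decide)
        have h1 := Finset.sum_le_sum_of_subset_of_nonneg
          (Finset.singleton_subset_iff.2 hm) (fun t _ _ => hnn t)
        rw [Finset.sum_singleton, mkExt_5] at h1
        have hfinal : (1:ℝ) ≤ mkExt fst snd prec x (Sum.inr (f, (6:Fin 8))) +
            ∑ f' ∈ Finset.univ.filter (fun f' => f' ≠ Sum.inr (f, (6:Fin 8)) ∧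
              Dominates (gfst fst snd) (gsnd fst snd) (gprec fst snd prec) f' (Sum.inr (f, (6:Fin 8)))),
              mkExt fst snd prec x f' := by
          rw [mkExt_6]
          linarith
        show (1:ℝ) ≤ _
        convert hfinal using 4
        all_goals rfl
      · have hm := dom_mem fst snd prec x f 2 2 7 (Or.inl rfl) (Or.inr rfl)
          (by decide) (by decide)
        have h1 := Finset.sum_le_sum_of_subset_of_nonneg
          (Finset.singleton_subset_iff.2 hm) (fun t _ _ => hnn t)
        rw [Finset.sum_singleton, mkExt_2] at h1
        have hfinal : (1:ℝ) ≤ mkExt fst snd prec x (Sum.inr (f, (7:Fin 8))) +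
            ∑ f' ∈ Finset.univ.filter (fun f' => f' ≠ Sum.inr (f, (7:Fin 8)) ∧
              Dominates (gfst fst snd) (gsnd fst snd) (gprec fst snd prec) f' (Sum.inr (f, (7:Fin 8)))),
              mkExt fst snd prec x f' := by
          rw [mkExt_7]
          linarith
        show (1:ℝ) ≤ _
        convert hfinal using 4
        all_goals rfl
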